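/- Let d be an odd positive integer. Then for every integer i ≥ 1, every weighted-homogeneous polynomial of weighted degree i·d in R lies in the k-subalgebra of R generated by the set of all monomials of weighted degree d together with the element y^d. -/

import Mathlib

open MvPolynomial

def degw (n : ℕ) (σ : (Fin n ⊕ Unit) →₀ ℕ) : ℕ :=
  (∑ j : Fin n, σ (Sum.inl j)) + 2 * σ (Sum.inr ())

def monoSet (k : Type*) [CommSemiring k] (n d : ℕ) : Set (MvPolynomial (Fin n ⊕ Unit) k) :=
  {p | ∃ σ : (Fin n ⊕ Unit) →₀ ℕ, p = monomial σ (1 : k) ∧ degw n σ = d}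

lemma split_aux (n : ℕ) (σ : (Fin n ⊕ Unit) →₀ ℕ) (m : ℕ)
    (hm : m ≤ ∑ j : Fin n, σ (Sum.inl j)) :
    ∃ τ : (Fin n ⊕ Unit) →₀ ℕ, (∀ s, τ s ≤ σ s) ∧ (∑ j : Fin n, τ (Sum.inl j)) = m ∧
      τ (Sum.inr ()) = 0 := by
  induction m with
  | zero => exact ⟨0, fun s => Nat.zero_le _, by simp, rfl⟩
  | succ m ih =>
    obtain ⟨τ, hle, hsum, hy⟩ := ih (by omega)
    have hlt : ∑ j : Fin n, τ (Sum.inl j) < ∑ j : Fin n, σ (Sum.inl j) := by omega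
    obtain ⟨j, -, hj⟩ := Finset.exists_lt_of_sum_lt hlt
    refine ⟨τ + Finsupp.single (Sum.inl j) 1, ?_, ?_, ?_⟩
    · intro s
      rcases eq_or_ne s (Sum.inl j) with rfl | hs
      · rw [Finsupp.add_apply, Finsupp.single_eq_same]
        omega
      · rw [Finsupp.add_apply, Finsupp.single_eq_of_ne' (Ne.symm hs), add_zero]
        exact hle s
    · have hone : ∑ j' : Fin n,
          (Finsupp.single (Sum.inl j) 1 : (Fin n ⊕ Unit) →₀ ℕ) (Sum.inl j') = 1 := by
        rw [Finset.sum_eq_single j]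
        · simp
        · intro b _ hb
          exact Finsupp.single_eq_of_ne' (fun h => hb (Sum.inl.inj h).symm)
        · simp
      simp only [Finsupp.add_apply, Finset.sum_add_distrib, hsum, hone]
    · rw [Finsupp.add_apply, hy, Finsupp.single_eq_of_ne' (by simp), add_zero]

lemma degw_add (n : ℕ) (α β : (Fin n ⊕ Unit) →₀ ℕ) :
    degw n (α + β) = degw n α + degw n β := by
  simp only [degw, Finsupp.add_apply, Finset.sum_add_distrib]
  ring

lemma mono_mem (k : Type*) [Field k] (n : ℕ) (d : ℕ) (hdpos : 0 < d) (hd : Odd d) :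
    ∀ i, 1 ≤ i → ∀ σ : (Fin n ⊕ Unit) →₀ ℕ, degw n σ = i * d →
      (monomial σ (1 : k)) ∈ Algebra.adjoin k
        (monoSet k n d ∪ {(X (Sum.inr ()) : MvPolynomial (Fin n ⊕ Unit) k) ^ d}) := by
  intro i hi
  induction i, hi using Nat.le_induction with
  | base =>
    intro σ hσ
    exact Algebra.subset_adjoin (Or.inl ⟨σ, rfl, by omega⟩)
  | succ i hi ih =>
    intro σ hσ
    have hab : (∑ j : Fin n, σ (Sum.inl j)) + 2 * σ (Sum.inr ()) = (i + 1) * d := hσ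
    set a := ∑ j : Fin n, σ (Sum.inl j) with ha
    set b := σ (Sum.inr ()) with hb
    have hsplitd : (i + 1) * d = i * d + d := by ring
    have hge : 2 * d ≤ (i + 1) * d := Nat.mul_le_mul_right d (by omega)
    obtain ⟨t, ht⟩ := hd
    rcases Nat.eq_zero_or_pos a with haz | hapos
    · -- pure y case
      have h2b : 2 * b = (i + 1) * d := by omega
      have hdb : d ∣ b := by
        have h2 : d ∣ 2 * b := by rw [h2b]; exact dvd_mul_left d (i + 1)
        exact (Odd.coprime_two_right ⟨t, ht⟩).dvd_of_dvd_mul_left h2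
      obtain ⟨q, hq⟩ := hdb
      have hz : ∑ j : Fin n, σ (Sum.inl j) = 0 := by rw [← ha]; exact haz
      have hσeq : σ = Finsupp.single (Sum.inr ()) b := by
        ext s
        rcases s with j | u
        · rw [Finset.sum_eq_zero_iff.mp hz j (Finset.mem_univ j),
            Finsupp.single_eq_of_ne' (by simp)]
        · cases u
          rw [Finsupp.single_eq_same]
      have hXb : (monomial (Finsupp.single (Sum.inr ()) b) (1 : k))
          = ((X (Sum.inr ()) : MvPolynomial (Fin n ⊕ Unit) k) ^ d) ^ q := by
        rw [← pow_mul]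
        rw [← hq]
        rw [X_pow_eq_monomial (R := k) (n := (Sum.inr () : Fin n ⊕ Unit)) (e := b)]
      rw [hσeq, hXb]
      refine Subalgebra.pow_mem _ (Algebra.subset_adjoin ?_) q
      exact Or.inr rfl
    · obtain ⟨m, c, hm, hc, hmc⟩ : ∃ m c, m ≤ a ∧ c ≤ b ∧ m + 2 * c = d := by
        rcases le_or_gt d a with h | h
        · exact ⟨d, 0, h, Nat.zero_le _, by omega⟩
        · exact ⟨a - ((a + 1) % 2), (d - (a - ((a + 1) % 2))) / 2, by omega, by omega, by omega⟩
      obtain ⟨τ, hτle, hτsum, hτy⟩ := split_aux n σ m hm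
      set τ' : (Fin n ⊕ Unit) →₀ ℕ := τ + Finsupp.single (Sum.inr ()) c with hτ'
      have hτ'inl : ∀ j : Fin n, τ' (Sum.inl j) = τ (Sum.inl j) := by
        intro j
        rw [hτ', Finsupp.add_apply, Finsupp.single_eq_of_ne' (by simp), add_zero]
      have hτ'inr : τ' (Sum.inr ()) = c := by
        rw [hτ', Finsupp.add_apply, hτy, Finsupp.single_eq_same, zero_add]
      have hτ'le : τ' ≤ σ := by
        rw [Finsupp.le_def]
        intro s
        rcases s with j | u
        · rw [hτ'inl j]; exact hτle (Sum.inl j)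
        · cases u
          rw [hτ'inr]
          exact hb ▸ hc
      have hτ'deg : degw n τ' = d := by
        simp only [degw, hτ'inr]
        rw [Finset.sum_congr rfl (fun j _ => hτ'inl j), hτsum]
        omega
      have hsplit : τ' + (σ - τ') = σ := add_tsub_cancel_of_le hτ'le
      have hrem : degw n (σ - τ') = i * d := by
        have hadd := degw_add n τ' (σ - τ')
        rw [hsplit] at hadd
        omega
      have hmono : (monomial σ (1 : k)) = monomial τ' 1 * monomial (σ - τ') 1 := by
        rw [monomial_mul, hsplit, one_mul]
      rw [hmono]
      exact mul_mem (Algebra.subset_adjoin (Or.inl ⟨τ', rfl, hτ'deg⟩)) (ih (σ - τ') hrem)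

theorem stmt_1 (k : Type*) [Field k] (n : ℕ) (hn : 1 ≤ n) (d : ℕ) (hdpos : 0 < d)
    (hd : Odd d) (i : ℕ) (hi : 1 ≤ i) (p : MvPolynomial (Fin n ⊕ Unit) k)
    (hp : ∀ σ ∈ p.support, degw n σ = i * d) :
    p ∈ Algebra.adjoin k
      (monoSet k n d ∪ {(X (Sum.inr ()) : MvPolynomial (Fin n ⊕ Unit) k) ^ d}) := by
  rw [p.as_sum]
  apply Subalgebra.sum_mem
  intro σ hσ
  have hco : (monomial σ (coeff σ p) : MvPolynomial (Fin n ⊕ Unit) k)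
      = coeff σ p • monomial σ 1 := by
    rw [smul_monomial, smul_eq_mul, mul_one]
  rw [hco]
  exact Subalgebra.smul_mem _ (mono_mem k n d hdpos hd i hi σ (hp σ hσ)) _
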